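/- Let (B_t)_{t≥0} be a standard one-dimensional Brownian motion and let Ṽ : ℝ → ℝ be continuous with Ṽ(x) ≤ Ã for all x and Ṽ(x) ≤ −E|x| for all |x| ≥ x₀ (E > 0, x₀ ≥ 0). Let Ψ : ℝ → ℝ be continuous with ∫ Ψ(x)² dx = 1 and suppose that for some λ ∈ ℝ and all t > 0, x ∈ ℝ: Ψ(x) = e^{λ t} E[exp(∫₀^t Ṽ(x + B_s) ds) Ψ(x + B_t)]. Then for every R > 0 there exists a finite constant C₁ = C₁(R), depending only on R, E, Ã and x₀ (and not on Ψ or λ), such that, with t₀ := 2R/E, for all x ∈ ℝ: e^{R|x|} |Ψ(x)| ≤ C₁ e^{λ t₀}. -/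

import Mathlib

open MeasureTheory ProbabilityTheory Real Filter

open scoped NNReal ENNReal

lemma gauss_exp_lintegral_le (c : ℝ) (v : ℝ≥0) :
    ∫⁻ y, ENNReal.ofReal (Real.exp (c * |y|)) ∂(gaussianReal 0 v) ≤
      ENNReal.ofReal (Real.sqrt 2 * Real.exp (c ^ 2 * v)) := by
  have hmeas : Measurable fun y : ℝ => ENNReal.ofReal (Real.exp (c * |y|)) :=
    ENNReal.measurable_ofReal.comp (Real.continuous_exp.comp
      (continuous_const.mul continuous_abs)).measurable
  have h1 : (1 : ℝ) ≤ Real.sqrt 2 := by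
    rw [show (1:ℝ) = Real.sqrt 1 by simp]
    exact Real.sqrt_le_sqrt (by norm_num)
  rcases eq_or_ne v 0 with hv | hv
  · rw [hv, gaussianReal_zero_var, lintegral_dirac' _ hmeas]
    simp only [abs_zero, mul_zero, Real.exp_zero, NNReal.coe_zero]
    apply ENNReal.ofReal_le_ofReal
    simpa using h1
  · have hv' : (0:ℝ) < v := by positivity
    rw [gaussianReal_of_var_ne_zero _ hv,
      lintegral_withDensity_eq_lintegral_mul _ (measurable_gaussianPDF _ _) hmeas]
    have hpt : ∀ y : ℝ, gaussianPDF 0 v y * ENNReal.ofReal (Real.exp (c * |y|)) ≤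
        ENNReal.ofReal ((Real.sqrt (2 * π * v))⁻¹ * Real.exp (c ^ 2 * v) *
          Real.exp (-(4 * (v:ℝ))⁻¹ * y ^ 2)) := by
      intro y
      rw [gaussianPDF, ← ENNReal.ofReal_mul (gaussianPDFReal_nonneg _ _ _)]
      apply ENNReal.ofReal_le_ofReal
      rw [gaussianPDFReal]
      have hexp : -(y - 0) ^ 2 / (2 * (v:ℝ)) + c * |y| ≤ c ^ 2 * v + -(4 * (v:ℝ))⁻¹ * y ^ 2 := by
        rw [← sub_nonneg]
        have hkey : c ^ 2 * (v:ℝ) + -(4 * (v:ℝ))⁻¹ * y ^ 2 -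
            (-(y - 0) ^ 2 / (2 * (v:ℝ)) + c * |y|) = (|y| - 2 * c * (v:ℝ)) ^ 2 / (4 * (v:ℝ)) := by
          have ha : |y| ^ 2 = y ^ 2 := sq_abs y
          generalize |y| = a at ha ⊢
          field_simp
          linear_combination (-2) * ha
        rw [hkey]
        positivity
      calc (√(2 * π * (v:ℝ)))⁻¹ * rexp (-(y - 0) ^ 2 / (2 * (v:ℝ))) * rexp (c * |y|)
          = (√(2 * π * (v:ℝ)))⁻¹ * rexp (-(y - 0) ^ 2 / (2 * (v:ℝ)) + c * |y|) := by
            rw [Real.exp_add]; ring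
        _ ≤ (√(2 * π * (v:ℝ)))⁻¹ * rexp (c ^ 2 * v + -(4 * (v:ℝ))⁻¹ * y ^ 2) :=
            mul_le_mul_of_nonneg_left (Real.exp_le_exp.2 hexp) (by positivity)
        _ = (√(2 * π * (v:ℝ)))⁻¹ * rexp (c ^ 2 * v) * rexp (-(4 * (v:ℝ))⁻¹ * y ^ 2) := by
            rw [Real.exp_add]; ring
    calc ∫⁻ y, gaussianPDF 0 v y * ENNReal.ofReal (Real.exp (c * |y|))
        ≤ ∫⁻ y, ENNReal.ofReal ((Real.sqrt (2 * π * v))⁻¹ * Real.exp (c ^ 2 * v) *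
          Real.exp (-(4 * (v:ℝ))⁻¹ * y ^ 2)) := lintegral_mono hpt
      _ = ENNReal.ofReal (∫ y : ℝ, (Real.sqrt (2 * π * v))⁻¹ * Real.exp (c ^ 2 * v) *
          Real.exp (-(4 * (v:ℝ))⁻¹ * y ^ 2)) := by
          rw [ofReal_integral_eq_lintegral_ofReal]
          · exact ((integrable_exp_neg_mul_sq (by positivity : (0:ℝ) < (4 * (v:ℝ))⁻¹)).const_mul _)
          · exact Eventually.of_forall fun y => by positivity
      _ ≤ ENNReal.ofReal (Real.sqrt 2 * Real.exp (c ^ 2 * v)) := by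
          apply ENNReal.ofReal_le_ofReal
          rw [integral_const_mul, integral_gaussian]
          have h4 : π / (4 * (v:ℝ))⁻¹ = 2 * (2 * π * v) := by field_simp; ring
          rw [h4, Real.sqrt_mul (by norm_num : (0:ℝ) ≤ 2)]
          have hs : (0:ℝ) < Real.sqrt (2 * π * v) := Real.sqrt_pos.2 (by positivity)
          rw [show (Real.sqrt (2*π*(v:ℝ)))⁻¹ * rexp (c ^ 2 * v) * (Real.sqrt 2 * Real.sqrt (2*π*(v:ℝ)))
              = (Real.sqrt 2 * rexp (c^2*(v:ℝ))) * (Real.sqrt (2*π*(v:ℝ)) * (Real.sqrt (2*π*(v:ℝ)))⁻¹) by ring]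
          rw [mul_inv_cancel₀ hs.ne', mul_one]

lemma jensen_exp_interval {T : ℝ} (hT : 0 < T) {u : ℝ → ℝ} (hu : Continuous u) :
    Real.exp (∫ s in (0:ℝ)..T, u s) ≤ (1 / T) * ∫ s in (0:ℝ)..T, Real.exp (T * u s) := by
  set μ : Measure ℝ := volume.restrict (Set.Ioc 0 T) with hμ
  have hμuniv : μ Set.univ = ENNReal.ofReal T := by
    rw [hμ, Measure.restrict_apply_univ, Real.volume_Ioc, sub_zero]
  haveI : IsFiniteMeasure μ := ⟨by rw [hμuniv]; exact ENNReal.ofReal_lt_top⟩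
  haveI : NeZero μ := ⟨by
    intro h
    rw [h] at hμuniv
    simp only [Measure.coe_zero, Pi.zero_apply] at hμuniv
    exact (ENNReal.ofReal_pos.2 hT).ne' hμuniv.symm⟩
  have hfi : Integrable (fun s => T * u s) μ := (continuous_const.mul hu).integrableOn_Ioc
  have hgi : Integrable (fun s => Real.exp (T * u s)) μ :=
    (Real.continuous_exp.comp (continuous_const.mul hu)).integrableOn_Ioc
  have h := convexOn_exp.map_average_le continuous_exp.continuousOn isClosed_univ
    (Eventually.of_forall fun s => Set.mem_univ _) hfi hgi
  rw [average_eq, average_eq, measureReal_def, hμuniv, ENNReal.toReal_ofReal hT.le] at h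
  have hIoc : ∀ f : ℝ → ℝ, ∫ s in (0:ℝ)..T, f s = ∫ s, f s ∂μ := fun f =>
    intervalIntegral.integral_of_le hT.le
  rw [hIoc, hIoc]
  have hTu : ∫ s, T * u s ∂μ = T * ∫ s, u s ∂μ := integral_const_mul T u
  rw [smul_eq_mul, smul_eq_mul, hTu, ← mul_assoc, inv_mul_cancel₀ hT.ne', one_mul] at h
  rw [one_div]
  exact h

/-- Standard one-dimensional Brownian motion (started at 0): a.s. continuous paths,
independent increments, and Gaussian increments of variance `t - s`. -/
def IsBrownianMotion {Ω : Type} [MeasurableSpace Ω] (P : Measure Ω) (B : ℝ → Ω → ℝ) : Prop :=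
  IsProbabilityMeasure P ∧
  (∀ t : ℝ, Measurable (B t)) ∧
  (∀ ω, B 0 ω = 0) ∧
  (∀ ω, Continuous fun t => B t ω) ∧
  (∀ s t : ℝ, 0 ≤ s → s ≤ t →
    Measure.map (fun ω => B t ω - B s ω) P = gaussianReal 0 (Real.toNNReal (t - s))) ∧
  (∀ (n : ℕ) (t : Fin (n + 1) → ℝ), Monotone t → (∀ i, 0 ≤ t i) →
    iIndepFun
      (fun i : Fin n => fun ω => B (t i.succ) ω - B (t i.castSucc) ω) P)

/-- Proposition 3.4(ii), `eq:boundPsik2`: exponential spatial decay, of any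
rate `R`, for L²-normalized eigenfunctions of the Feynman–Kac semigroup, with a constant
`C₁ = C₁(R)` depending only on `R, E, Ã, x₀` (and not on `Ψ` or `λ`). -/
theorem eigenfunction_exponential_decay
    {Ω : Type} [MeasurableSpace Ω] (P : Measure Ω) (B : ℝ → Ω → ℝ)
    (hB : IsBrownianMotion P B)
    (Vt : ℝ → ℝ) (Atil E x₀ : ℝ) (hVc : Continuous Vt) (hVb : ∀ x, Vt x ≤ Atil)
    (hE : 0 < E) (hx₀ : 0 ≤ x₀) (hdecay : ∀ x : ℝ, x₀ ≤ |x| → Vt x ≤ -E * |x|) :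
    ∀ R : ℝ, 0 < R → ∃ C₁ : ℝ,
      ∀ (Ψ : ℝ → ℝ) (lam : ℝ), Continuous Ψ → (∫ x : ℝ, (Ψ x) ^ 2) = 1 →
        (∀ t : ℝ, 0 < t → ∀ x : ℝ,
          Ψ x = Real.exp (lam * t) *
            ∫ ω, Real.exp (∫ s in (0:ℝ)..t, Vt (x + B s ω)) * Ψ (x + B t ω) ∂P) →
        ∀ x : ℝ, Real.exp (R * |x|) * |Ψ x| ≤ C₁ * Real.exp (lam * (2 * R / E)) := by
  obtain ⟨hP, hBm, hB0, hBc, hBinc, -⟩ := hB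
  haveI := hP
  intro R hR
  have ht₀ : (0:ℝ) < 2 * R / E := by positivity
  set t₀ : ℝ := 2 * R / E with ht₀def
  have hEt₀ : E * t₀ = 2 * R := by rw [ht₀def]; field_simp
  set A' : ℝ := max Atil 0 + E * x₀ with hA'def
  have hA'nn : 0 ≤ A' := add_nonneg (le_max_right _ _) (mul_nonneg hE.le hx₀)
  have hV' : ∀ y, Vt y ≤ A' - E * |y| := by
    intro y
    rcases le_or_gt x₀ |y| with h | h
    · have := hdecay y h
      have h0 : (0:ℝ) ≤ max Atil 0 := le_max_right _ _
      have h1 : (0:ℝ) ≤ E * x₀ := mul_nonneg hE.le hx₀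
      rw [hA'def]; linarith
    · have := hVb y
      have h0 : Atil ≤ max Atil 0 := le_max_left _ _
      have h1 : E * |y| ≤ E * x₀ := mul_le_mul_of_nonneg_left h.le hE.le
      rw [hA'def]; linarith
  set c : ℝ := 2 * E * t₀ with hcdef
  set M₁ : ℝ := Real.sqrt 2 * Real.exp (c ^ 2 * t₀) with hM₁def
  have hM₁nn : 0 ≤ M₁ := mul_nonneg (Real.sqrt_nonneg _) (Real.exp_pos _).le
  set d : ℝ := (Real.sqrt (2 * π * t₀))⁻¹ with hddef
  have hdnn : 0 ≤ d := inv_nonneg.2 (Real.sqrt_nonneg _)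
  set K : ℝ := Real.exp (t₀ * A') with hKdef
  refine ⟨K * (M₁ + d) / 2, ?_⟩
  intro Ψ lam hΨc hΨnorm heig x
  -- distribution of B s
  have hmap : ∀ s : ℝ, 0 ≤ s → Measure.map (B s) P = gaussianReal 0 s.toNNReal := by
    intro s hs
    have h := hBinc 0 s le_rfl hs
    simp only [hB0, sub_zero] at h
    exact h
  -- joint measurability
  have hjoint : Measurable (Function.uncurry B) :=
    measurable_uncurry_of_continuous_of_measurable hBc hBm
  have hjabs : Measurable fun p : Ω × ℝ => |B p.2 p.1| :=
    (hjoint.comp measurable_swap).abs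
  -- G
  set G : Ω → ℝ := fun ω => ∫ s in Set.Ioc (0:ℝ) t₀, |B s ω| with hGdef
  have hGm : Measurable G :=
    (hjabs.stronglyMeasurable.integral_prod_right'
      (ν := volume.restrict (Set.Ioc (0:ℝ) t₀))).measurable
  have hGI : ∀ ω, ∫ s in (0:ℝ)..t₀, |B s ω| = G ω := fun ω =>
    intervalIntegral.integral_of_le ht₀.le
  -- g
  set g : Ω → ℝ := fun ω => Real.exp (2 * E * G ω) with hgdef
  have hgm : Measurable g := Real.continuous_exp.measurable.comp (measurable_const.mul hGm)
  have hgnn : ∀ ω, 0 ≤ g ω := fun ω => (Real.exp_pos _).le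
  -- Jensen pointwise
  have hjen : ∀ ω, g ω ≤ (1 / t₀) * ∫ s in (0:ℝ)..t₀, Real.exp (c * |B s ω|) := by
    intro ω
    have hucont : Continuous fun s => 2 * E * |B s ω| := continuous_const.mul (hBc ω).abs
    have h := jensen_exp_interval ht₀ hucont
    rw [intervalIntegral.integral_const_mul, hGI ω] at h
    have hfun : (fun s => Real.exp (t₀ * (2 * E * |B s ω|)))
        = fun s => Real.exp (c * |B s ω|) := by
      funext s; congr 1; rw [hcdef]; ring
    rw [hfun] at h
    exact h
  -- product measurability for Tonelli
  have hprodm : Measurable (Function.uncurry fun ω s =>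
      ENNReal.ofReal (Real.exp (c * |B s ω|))) := by
    apply ENNReal.measurable_ofReal.comp
    exact Real.continuous_exp.measurable.comp (measurable_const.mul hjabs)
  -- lintegral bound for g
  have hglint : ∫⁻ ω, ENNReal.ofReal (g ω) ∂P ≤ ENNReal.ofReal M₁ := by
    have hinner : ∀ s ∈ Set.Ioc (0:ℝ) t₀,
        ∫⁻ ω, ENNReal.ofReal (Real.exp (c * |B s ω|)) ∂P ≤ ENNReal.ofReal M₁ := by
      intro s hs
      have hms : Measurable fun y : ℝ => ENNReal.ofReal (Real.exp (c * |y|)) :=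
        ENNReal.measurable_ofReal.comp (Real.continuous_exp.comp
          (continuous_const.mul continuous_abs)).measurable
      have heqm : ∫⁻ ω, ENNReal.ofReal (Real.exp (c * |B s ω|)) ∂P
          = ∫⁻ y, ENNReal.ofReal (Real.exp (c * |y|)) ∂(Measure.map (B s) P) :=
        (lintegral_map hms (hBm s)).symm
      rw [heqm, hmap s hs.1.le]
      refine (gauss_exp_lintegral_le c _).trans (ENNReal.ofReal_le_ofReal ?_)
      rw [hM₁def]
      apply mul_le_mul_of_nonneg_left _ (Real.sqrt_nonneg 2)
      rw [Real.exp_le_exp]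
      have hco : ((s.toNNReal : ℝ)) = s := Real.coe_toNNReal s hs.1.le
      rw [hco]
      nlinarith [sq_nonneg c, hs.2]
    calc ∫⁻ ω, ENNReal.ofReal (g ω) ∂P
        ≤ ∫⁻ ω, (ENNReal.ofReal (1 / t₀) *
            ∫⁻ s in Set.Ioc (0:ℝ) t₀, ENNReal.ofReal (Real.exp (c * |B s ω|)) ∂volume) ∂P := by
          apply lintegral_mono
          intro ω
          calc ENNReal.ofReal (g ω)
              ≤ ENNReal.ofReal ((1 / t₀) * ∫ s in (0:ℝ)..t₀, Real.exp (c * |B s ω|)) :=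
                ENNReal.ofReal_le_ofReal (hjen ω)
            _ = ENNReal.ofReal (1 / t₀) *
                ENNReal.ofReal (∫ s in (0:ℝ)..t₀, Real.exp (c * |B s ω|)) :=
                ENNReal.ofReal_mul (by positivity)
            _ = ENNReal.ofReal (1 / t₀) *
                ∫⁻ s in Set.Ioc (0:ℝ) t₀, ENNReal.ofReal (Real.exp (c * |B s ω|)) := by
                have hcont : Continuous fun s : ℝ => Real.exp (c * |B s ω|) :=
                  Real.continuous_exp.comp (continuous_const.mul (hBc ω).abs)
                rw [intervalIntegral.integral_of_le ht₀.le,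
                  ofReal_integral_eq_lintegral_ofReal hcont.integrableOn_Ioc
                    (Eventually.of_forall fun s => (Real.exp_pos _).le)]
      _ = ENNReal.ofReal (1 / t₀) * ∫⁻ ω,
            (∫⁻ s in Set.Ioc (0:ℝ) t₀, ENNReal.ofReal (Real.exp (c * |B s ω|))) ∂P :=
          lintegral_const_mul _ hprodm.lintegral_prod_right'
      _ = ENNReal.ofReal (1 / t₀) * ∫⁻ s in Set.Ioc (0:ℝ) t₀,
            (∫⁻ ω, ENNReal.ofReal (Real.exp (c * |B s ω|)) ∂P) := by
          rw [lintegral_lintegral_swap hprodm.aemeasurable]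
      _ ≤ ENNReal.ofReal (1 / t₀) * ∫⁻ (_ : ℝ) in Set.Ioc (0:ℝ) t₀, ENNReal.ofReal M₁ :=
          mul_le_mul_right (setLIntegral_mono measurable_const hinner) _
      _ = ENNReal.ofReal M₁ := by
          rw [setLIntegral_const, Real.volume_Ioc, sub_zero,
            ← ENNReal.ofReal_mul (by positivity), ← ENNReal.ofReal_mul (by positivity)]
          congr 1
          field_simp
  -- integrability and integral bound of g
  have hgint : Integrable g P := by
    refine ⟨hgm.aestronglyMeasurable, ?_⟩
    rw [hasFiniteIntegral_iff_ofReal (Eventually.of_forall hgnn)]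
    exact lt_of_le_of_lt hglint ENNReal.ofReal_lt_top
  have hgval : ∫ ω, g ω ∂P ≤ M₁ := by
    rw [integral_eq_lintegral_of_nonneg_ae (Eventually.of_forall hgnn)
      hgm.aestronglyMeasurable]
    exact ENNReal.toReal_le_of_le_ofReal hM₁nn hglint
  -- q
  set q : Ω → ℝ := fun ω => (Ψ (x + B t₀ ω)) ^ 2 with hqdef
  have hqm : Measurable q :=
    (hΨc.measurable.comp (measurable_const.add (hBm t₀))).pow_const 2
  have hqnn : ∀ ω, 0 ≤ q ω := fun ω => sq_nonneg _
  have hΨ2int : Integrable (fun y => (Ψ y) ^ 2) := by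
    by_contra h
    rw [integral_undef h] at hΨnorm
    exact one_ne_zero hΨnorm.symm
  have hΨ2lint : ∫⁻ y, ENNReal.ofReal ((Ψ y) ^ 2) = 1 := by
    rw [← ofReal_integral_eq_lintegral_ofReal hΨ2int
      (Eventually.of_forall fun y => sq_nonneg _), hΨnorm, ENNReal.ofReal_one]
  have hqlint : ∫⁻ ω, ENNReal.ofReal (q ω) ∂P ≤ ENNReal.ofReal d := by
    have hvne : Real.toNNReal t₀ ≠ 0 := by
      simp only [ne_eq, Real.toNNReal_eq_zero, not_le]
      exact ht₀
    have hmg : Measurable fun y : ℝ => ENNReal.ofReal ((Ψ (x + y)) ^ 2) :=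
      ENNReal.measurable_ofReal.comp
        ((hΨc.measurable.comp (measurable_const.add measurable_id)).pow_const 2)
    have heqm : ∫⁻ ω, ENNReal.ofReal (q ω) ∂P
        = ∫⁻ y, ENNReal.ofReal ((Ψ (x + y)) ^ 2) ∂(Measure.map (B t₀) P) :=
      (lintegral_map hmg (hBm t₀)).symm
    rw [heqm, hmap t₀ ht₀.le, gaussianReal_of_var_ne_zero _ hvne,
      lintegral_withDensity_eq_lintegral_mul _ (measurable_gaussianPDF _ _) hmg]
    have hpdf : ∀ y : ℝ, gaussianPDF 0 t₀.toNNReal y ≤ ENNReal.ofReal d := by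
      intro y
      rw [gaussianPDF]
      apply ENNReal.ofReal_le_ofReal
      rw [gaussianPDFReal, hddef, Real.coe_toNNReal t₀ ht₀.le]
      calc (√(2 * π * t₀))⁻¹ * rexp (-(y - 0) ^ 2 / (2 * t₀))
          ≤ (√(2 * π * t₀))⁻¹ * 1 := by
            apply mul_le_mul_of_nonneg_left _ (by positivity)
            rw [Real.exp_le_one_iff]
            apply div_nonpos_of_nonpos_of_nonneg
            · nlinarith [sq_nonneg (y - 0)]
            · positivity
        _ = (√(2 * π * t₀))⁻¹ := mul_one _
    calc ∫⁻ y, gaussianPDF 0 t₀.toNNReal y * ENNReal.ofReal ((Ψ (x + y)) ^ 2)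
        ≤ ∫⁻ y, ENNReal.ofReal d * ENNReal.ofReal ((Ψ (x + y)) ^ 2) :=
          lintegral_mono fun y => mul_le_mul_left (hpdf y) _
      _ = ENNReal.ofReal d * ∫⁻ y, ENNReal.ofReal ((Ψ (x + y)) ^ 2) :=
          lintegral_const_mul _ hmg
      _ = ENNReal.ofReal d * ∫⁻ y, ENNReal.ofReal ((Ψ y) ^ 2) := by
          rw [lintegral_add_left_eq_self (fun y => ENNReal.ofReal ((Ψ y) ^ 2)) x]
      _ = ENNReal.ofReal d := by rw [hΨ2lint, mul_one]
  have hqint : Integrable q P := by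
    refine ⟨hqm.aestronglyMeasurable, ?_⟩
    rw [hasFiniteIntegral_iff_ofReal (Eventually.of_forall hqnn)]
    exact lt_of_le_of_lt hqlint ENNReal.ofReal_lt_top
  have hqval : ∫ ω, q ω ∂P ≤ d := by
    rw [integral_eq_lintegral_of_nonneg_ae (Eventually.of_forall hqnn)
      hqm.aestronglyMeasurable]
    exact ENNReal.toReal_le_of_le_ofReal hdnn hqlint
  -- pointwise bound on the Feynman–Kac integrand
  set F : Ω → ℝ := fun ω =>
    Real.exp (∫ s in (0:ℝ)..t₀, Vt (x + B s ω)) * Ψ (x + B t₀ ω) with hFdef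
  have hptF : ∀ ω, |F ω| ≤ K * Real.exp (-(2 * R * |x|)) * ((g ω + q ω) / 2) := by
    intro ω
    have hVint : ∫ s in (0:ℝ)..t₀, Vt (x + B s ω) ≤ t₀ * A' - 2 * R * |x| + E * G ω := by
      have hint1 : IntervalIntegrable (fun s => Vt (x + B s ω)) volume 0 t₀ :=
        (hVc.comp (continuous_const.add (hBc ω))).intervalIntegrable _ _
      have hintB : IntervalIntegrable (fun s => E * |B s ω|) volume 0 t₀ :=
        (continuous_const.mul (hBc ω).abs).intervalIntegrable _ _
      have hint2 : IntervalIntegrable (fun s => A' - E * |x| + E * |B s ω|) volume 0 t₀ :=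
        (continuous_const.add (continuous_const.mul (hBc ω).abs)).intervalIntegrable _ _
      have hmono := intervalIntegral.integral_mono_on ht₀.le hint1 hint2 (fun s _ => by
        have h1 := hV' (x + B s ω)
        have h2 : |x| - |B s ω| ≤ |x + B s ω| := by
          have h3 : |x| ≤ |x + B s ω| + |B s ω| := by
            calc |x| = |(x + B s ω) + (-(B s ω))| := by ring_nf
              _ ≤ |x + B s ω| + |(-(B s ω))| := abs_add_le _ _
              _ = |x + B s ω| + |B s ω| := by rw [abs_neg]
          linarith
        have h4 : E * (|x| - |B s ω|) ≤ E * |x + B s ω| :=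
          mul_le_mul_of_nonneg_left h2 hE.le
        have h5 : E * (|x| - |B s ω|) = E * |x| - E * |B s ω| := by ring
        linarith)
      calc ∫ s in (0:ℝ)..t₀, Vt (x + B s ω)
          ≤ ∫ s in (0:ℝ)..t₀, (A' - E * |x| + E * |B s ω|) := hmono
        _ = t₀ * (A' - E * |x|) + E * G ω := by
            rw [intervalIntegral.integral_add (intervalIntegrable_const) hintB,
              intervalIntegral.integral_const, intervalIntegral.integral_const_mul, hGI ω]
            simp [smul_eq_mul]
        _ = t₀ * A' - 2 * R * |x| + E * G ω := by
            linear_combination (-|x|) * hEt₀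
    have e1 : |F ω| = Real.exp (∫ s in (0:ℝ)..t₀, Vt (x + B s ω)) * |Ψ (x + B t₀ ω)| := by
      rw [hFdef, abs_mul, abs_of_pos (Real.exp_pos _)]
    have e2 : Real.exp (∫ s in (0:ℝ)..t₀, Vt (x + B s ω))
        ≤ K * Real.exp (-(2 * R * |x|)) * Real.exp (E * G ω) := by
      rw [hKdef, ← Real.exp_add, ← Real.exp_add]
      exact Real.exp_le_exp.2 (by linarith)
    have e3 : Real.exp (E * G ω) * |Ψ (x + B t₀ ω)| ≤ (g ω + q ω) / 2 := by
      have h2ab := two_mul_le_add_sq (Real.exp (E * G ω)) (|Ψ (x + B t₀ ω)|)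
      have ha2 : Real.exp (E * G ω) ^ 2 = g ω := by
        rw [hgdef, sq, ← Real.exp_add]
        congr 1
        ring
      have hb2 : |Ψ (x + B t₀ ω)| ^ 2 = q ω := sq_abs _
      nlinarith [ha2, hb2, h2ab]
    calc |F ω| = Real.exp (∫ s in (0:ℝ)..t₀, Vt (x + B s ω)) * |Ψ (x + B t₀ ω)| := e1
      _ ≤ (K * Real.exp (-(2 * R * |x|)) * Real.exp (E * G ω)) * |Ψ (x + B t₀ ω)| :=
          mul_le_mul_of_nonneg_right e2 (abs_nonneg _)
      _ = (K * Real.exp (-(2 * R * |x|))) * (Real.exp (E * G ω) * |Ψ (x + B t₀ ω)|) := by ring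
      _ ≤ (K * Real.exp (-(2 * R * |x|))) * ((g ω + q ω) / 2) :=
          mul_le_mul_of_nonneg_left e3 (by positivity)
  -- main estimate
  have hKnn : (0:ℝ) < K := Real.exp_pos _
  have hmainb : |Ψ x| ≤ Real.exp (lam * t₀) *
      (K * Real.exp (-(2 * R * |x|)) * ((M₁ + d) / 2)) := by
    have heq := heig t₀ ht₀ x
    have hnorm : |∫ ω, F ω ∂P| ≤ ∫ ω, |F ω| ∂P := by
      simpa [Real.norm_eq_abs] using
        norm_integral_le_integral_norm (μ := P) (f := F)
    have hintRHS : Integrable (fun ω => K * Real.exp (-(2 * R * |x|)) * ((g ω + q ω) / 2)) P :=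
      (((hgint.add hqint).div_const 2).const_mul _)
    have habs : ∫ ω, |F ω| ∂P ≤ ∫ ω, K * Real.exp (-(2 * R * |x|)) * ((g ω + q ω) / 2) ∂P :=
      integral_mono_of_nonneg (Eventually.of_forall fun ω => abs_nonneg _) hintRHS
        (Eventually.of_forall hptF)
    have hval : ∫ ω, K * Real.exp (-(2 * R * |x|)) * ((g ω + q ω) / 2) ∂P
        ≤ K * Real.exp (-(2 * R * |x|)) * ((M₁ + d) / 2) := by
      rw [integral_const_mul]
      apply mul_le_mul_of_nonneg_left _ (by positivity)
      rw [integral_div, integral_add hgint hqint]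
      gcongr
    calc |Ψ x| = |Real.exp (lam * t₀) * ∫ ω, F ω ∂P| := by rw [heq]
      _ = Real.exp (lam * t₀) * |∫ ω, F ω ∂P| := by
          rw [abs_mul, abs_of_pos (Real.exp_pos _)]
      _ ≤ Real.exp (lam * t₀) * ∫ ω, |F ω| ∂P :=
          mul_le_mul_of_nonneg_left hnorm (Real.exp_pos _).le
      _ ≤ Real.exp (lam * t₀) * ∫ ω, K * Real.exp (-(2 * R * |x|)) * ((g ω + q ω) / 2) ∂P :=
          mul_le_mul_of_nonneg_left habs (Real.exp_pos _).le
      _ ≤ Real.exp (lam * t₀) * (K * Real.exp (-(2 * R * |x|)) * ((M₁ + d) / 2)) :=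
          mul_le_mul_of_nonneg_left hval (Real.exp_pos _).le
  -- conclude
  calc Real.exp (R * |x|) * |Ψ x|
      ≤ Real.exp (R * |x|) * (Real.exp (lam * t₀) *
          (K * Real.exp (-(2 * R * |x|)) * ((M₁ + d) / 2))) :=
        mul_le_mul_of_nonneg_left hmainb (Real.exp_pos _).le
    _ = (K * (M₁ + d) / 2) * Real.exp (lam * (2 * R / E)) *
          (Real.exp (R * |x|) * Real.exp (-(2 * R * |x|))) := by
        rw [← ht₀def]
        ring
    _ = (K * (M₁ + d) / 2) * Real.exp (lam * (2 * R / E)) * Real.exp (-(R * |x|)) := by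
        rw [← Real.exp_add]
        congr 1
        ring
    _ ≤ (K * (M₁ + d) / 2) * Real.exp (lam * (2 * R / E)) * 1 := by
        apply mul_le_mul_of_nonneg_left _ (by positivity)
        rw [Real.exp_le_one_iff]
        have : (0:ℝ) ≤ R * |x| := by positivity
        linarith
    _ = (K * (M₁ + d) / 2) * Real.exp (lam * (2 * R / E)) := mul_one _
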